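/- For κ ∈ [0,1), define 𝒞(κ) = (∫_{-π}^{π} cos²θ (1 - κ² cos²θ)^{-3/2} dθ) / (∫_{-π}^{π} (1 - κ² cos²θ)^{-3/2} dθ). Then 𝒞 is (weakly) increasing on [0,1); more precisely, writing the ratio in the substituted form U(a)/V(a) with U(a) = ∫_{-π}^{π} ((1+cos φ)/2)(1 + a cos φ)^{-3/2} dφ and V(a) = ∫_{-π}^{π} (1 + a cos φ)^{-3/2} dφ for a ∈ (-1,1), one has U'(a)V(a) - U(a)V'(a) ≤ 0, i.e., U/V is nonincreasing in a. -/

import Mathlib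

open Real intervalIntegral
open MeasureTheory Set


lemma base_pos {a : ℝ} (ha : |a| < 1) (φ : ℝ) : 0 < 1 + a * Real.cos φ := by
  have h1 : |a * Real.cos φ| ≤ |a| := by
    rw [abs_mul]
    exact mul_le_of_le_one_right (abs_nonneg _) (Real.abs_cos_le_one φ)
  have := abs_le.1 h1
  linarith [this.1]

lemma cont_w {a : ℝ} (ha : |a| < 1) (p : ℝ) :
    Continuous (fun φ => (1 + a * Real.cos φ) ^ p) :=
  (by continuity : Continuous (fun φ : ℝ => 1 + a * Real.cos φ)).rpow_const
    (fun φ => Or.inl (ne_of_gt (base_pos ha φ)))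

lemma intble {a : ℝ} (ha : |a| < 1) (p : ℝ) {g : ℝ → ℝ} (hg : Continuous g) :
    IntervalIntegrable (fun φ => g φ * (1 + a * Real.cos φ) ^ p) volume (-π) π :=
  (hg.mul (cont_w ha p)).intervalIntegrable _ _

lemma hasDerivAt_wint {g : ℝ → ℝ} (hg : Continuous g) (hgb : ∀ φ, |g φ| ≤ 1)
    {a : ℝ} (ha : |a| < 1) :
    HasDerivAt (fun x => ∫ φ in (-π)..π, g φ * (1 + x * Real.cos φ) ^ (-(3:ℝ)/2))
      (∫ φ in (-π)..π,
        g φ * (Real.cos φ * (-(3:ℝ)/2) * (1 + a * Real.cos φ) ^ (-(3:ℝ)/2 - 1))) a := by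
  set ε : ℝ := (1 - |a|) / 2 with hε
  have hε_pos : 0 < ε := by simp only [hε]; linarith
  have hball : ∀ x ∈ Metric.ball a ε, |x| < 1 ∧ ∀ φ : ℝ, ε ≤ 1 + x * Real.cos φ := by
    intro x hx
    rw [Metric.mem_ball, Real.dist_eq] at hx
    have hx1 : |x| < 1 := by
      have := abs_sub_abs_le_abs_sub x a
      simp only [hε] at hx
      linarith
    refine ⟨hx1, fun φ => ?_⟩
    have h1 : |x * Real.cos φ| ≤ |x| := by
      rw [abs_mul]; exact mul_le_of_le_one_right (abs_nonneg _) (Real.abs_cos_le_one φ)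
    have h2 := (abs_le.1 h1).1
    have h3 : |x| ≤ |a| + ε := by
      have := abs_sub_abs_le_abs_sub x a; linarith
    simp only [hε] at h3 ⊢
    linarith
  have key := intervalIntegral.hasDerivAt_integral_of_dominated_loc_of_deriv_le
    (F := fun x φ => g φ * (1 + x * Real.cos φ) ^ (-(3:ℝ)/2))
    (F' := fun x φ => g φ * (Real.cos φ * (-(3:ℝ)/2) * (1 + x * Real.cos φ) ^ (-(3:ℝ)/2 - 1)))
    (x₀ := a) (a := -π) (b := π) (μ := volume)
    (bound := fun _ => (3:ℝ)/2 * ε ^ (-(3:ℝ)/2 - 1)) (Metric.ball_mem_nhds a hε_pos)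
    ?meas ?int ?meas' ?bound ?bint ?diff
  · exact key.2
  case meas =>
    filter_upwards [Metric.ball_mem_nhds a hε_pos] with x hx
    exact ((hg.mul (cont_w (hball x hx).1 _)).aestronglyMeasurable).restrict
  case int => exact intble ha _ hg
  case meas' =>
    exact ((hg.mul ((by continuity : Continuous Real.cos).mul
      continuous_const |>.mul (cont_w ha _))).aestronglyMeasurable).restrict
  case bound =>
    refine Filter.Eventually.of_forall (fun φ _ => fun x hx => ?_)
    obtain ⟨hx1, hx2⟩ := hball x hx
    have hb : 0 < 1 + x * Real.cos φ := base_pos hx1 φ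
    have hw : (1 + x * Real.cos φ) ^ (-(3:ℝ)/2 - 1) ≤ ε ^ (-(3:ℝ)/2 - 1) :=
      Real.rpow_le_rpow_of_nonpos hε_pos (hx2 φ) (by norm_num)
    have hwpos : (0:ℝ) < (1 + x * Real.cos φ) ^ (-(3:ℝ)/2 - 1) := Real.rpow_pos_of_pos hb _
    rw [Real.norm_eq_abs, abs_mul, abs_mul, abs_mul]
    have h1 : |g φ| ≤ 1 := hgb φ
    have h2 : |Real.cos φ| ≤ 1 := Real.abs_cos_le_one φ
    have h3 : |(-(3:ℝ)/2)| = 3/2 := by norm_num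
    have h4 : |(1 + x * Real.cos φ) ^ (-(3:ℝ)/2 - 1)| = (1 + x * Real.cos φ) ^ (-(3:ℝ)/2 - 1) :=
      abs_of_pos hwpos
    rw [h3, h4]
    nlinarith [abs_nonneg (g φ), abs_nonneg (Real.cos φ), hwpos.le,
      mul_le_mul_of_nonneg_right h2 hwpos.le]
  case bint => exact intervalIntegrable_const
  case diff =>
    refine Filter.Eventually.of_forall (fun φ _ => fun x hx => ?_)
    have hb : 0 < 1 + x * Real.cos φ := base_pos (hball x hx).1 φ
    have h1 : HasDerivAt (fun y : ℝ => 1 + y * Real.cos φ) (Real.cos φ) x := by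
      simpa using ((hasDerivAt_id x).mul_const (Real.cos φ)).const_add 1
    have h2 := h1.rpow_const (p := -(3:ℝ)/2) (Or.inl (ne_of_gt hb))
    exact (h2.const_mul (g φ))


/-- `𝒞(κ)`, the normalized second trigonometric moment of the Palm angle density. -/
noncomputable def Ccal (κ : ℝ) : ℝ :=
  (∫ θ in (-π)..π, Real.cos θ ^ 2 * (1 - κ ^ 2 * Real.cos θ ^ 2) ^ (-(3 : ℝ) / 2)) /
    (∫ θ in (-π)..π, (1 - κ ^ 2 * Real.cos θ ^ 2) ^ (-(3 : ℝ) / 2))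

/-- `U(a) = ∫_{-π}^{π} ((1+cos φ)/2)(1 + a cos φ)^{-3/2} dφ`. -/
noncomputable def Ufun (a : ℝ) : ℝ :=
  ∫ φ in (-π)..π, ((1 + Real.cos φ) / 2) * (1 + a * Real.cos φ) ^ (-(3 : ℝ) / 2)

/-- `V(a) = ∫_{-π}^{π} (1 + a cos φ)^{-3/2} dφ`. -/
noncomputable def Vfun (a : ℝ) : ℝ :=
  ∫ φ in (-π)..π, (1 + a * Real.cos φ) ^ (-(3 : ℝ) / 2)

/-- weighted moments with weight `(1+a cos φ)^{-5/2}` -/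
noncomputable def Iw (a : ℝ) (k : ℕ) : ℝ :=
  ∫ φ in (-π)..π, Real.cos φ ^ k * (1 + a * Real.cos φ) ^ (-(3:ℝ)/2 - 1)

lemma Iw_zero_pos {a : ℝ} (ha : |a| < 1) : 0 < Iw a 0 := by
  apply intervalIntegral.intervalIntegral_pos_of_pos (f := fun φ =>
    Real.cos φ ^ 0 * (1 + a * Real.cos φ) ^ (-(3:ℝ)/2 - 1))
  · exact intble ha _ (by continuity)
  · intro x
    simpa using Real.rpow_pos_of_pos (base_pos ha x) _
  · linarith [Real.pi_pos]

lemma rpow_split {a : ℝ} (ha : |a| < 1) (φ : ℝ) :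
    (1 + a * Real.cos φ) ^ (-(3:ℝ)/2)
      = (1 + a * Real.cos φ) * (1 + a * Real.cos φ) ^ (-(3:ℝ)/2 - 1) := by
  have hb := base_pos ha φ
  have h := Real.rpow_add hb 1 (-(3:ℝ)/2 - 1)
  rw [show (1:ℝ) + (-(3:ℝ)/2 - 1) = -(3:ℝ)/2 by ring] at h
  rw [h, Real.rpow_one]

lemma wint_poly {a : ℝ} (ha : |a| < 1) (c0 c1 c2 : ℝ) :
    (∫ φ in (-π)..π, (c0 + c1 * Real.cos φ + c2 * Real.cos φ ^ 2) *
        (1 + a * Real.cos φ) ^ (-(3:ℝ)/2 - 1))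
      = c0 * Iw a 0 + c1 * Iw a 1 + c2 * Iw a 2 := by
  unfold Iw
  rw [← intervalIntegral.integral_const_mul, ← intervalIntegral.integral_const_mul,
    ← intervalIntegral.integral_const_mul,
    ← intervalIntegral.integral_add ((intble ha _ (by continuity)).const_mul c0)
      ((intble ha _ (by continuity)).const_mul c1),
    ← intervalIntegral.integral_add
      (((intble ha _ (by continuity)).const_mul c0).add
        ((intble ha _ (by continuity)).const_mul c1))
      ((intble ha _ (by continuity)).const_mul c2)]
  apply intervalIntegral.integral_congr
  intro φ _
  simp only
  ring

lemma Vfun_eq {a : ℝ} (ha : |a| < 1) : Vfun a = Iw a 0 + a * Iw a 1 := by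
  unfold Vfun
  rw [intervalIntegral.integral_congr (g := fun φ =>
      (1 + a * Real.cos φ + 0 * Real.cos φ ^ 2) * (1 + a * Real.cos φ) ^ (-(3:ℝ)/2 - 1))
    (fun φ _ => by rw [rpow_split ha φ]; ring), wint_poly ha]
  ring

lemma Ufun_eq {a : ℝ} (ha : |a| < 1) :
    Ufun a = (1/2) * Iw a 0 + ((1+a)/2) * Iw a 1 + (a/2) * Iw a 2 := by
  unfold Ufun
  rw [intervalIntegral.integral_congr (g := fun φ =>
      (1/2 + (1+a)/2 * Real.cos φ + a/2 * Real.cos φ ^ 2) *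
        (1 + a * Real.cos φ) ^ (-(3:ℝ)/2 - 1))
    (fun φ _ => by rw [rpow_split ha φ]; ring), wint_poly ha]

lemma hasDerivAt_Vfun {a : ℝ} (ha : |a| < 1) :
    HasDerivAt Vfun (-(3:ℝ)/2 * Iw a 1) a := by
  have h := hasDerivAt_wint (g := fun _ => (1:ℝ)) continuous_const
    (fun φ => by norm_num) ha
  rw [show (fun x => ∫ φ in (-π)..π, (1:ℝ) * (1 + x * Real.cos φ) ^ (-(3:ℝ)/2)) = Vfun from
    funext fun x => by unfold Vfun; simp] at h
  convert h using 1
  rw [intervalIntegral.integral_congr (g := fun φ =>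
      (0 + (-(3:ℝ)/2) * Real.cos φ + 0 * Real.cos φ ^ 2) *
        (1 + a * Real.cos φ) ^ (-(3:ℝ)/2 - 1))
    (fun φ _ => by simp only; ring), wint_poly ha]
  ring

lemma hasDerivAt_Ufun {a : ℝ} (ha : |a| < 1) :
    HasDerivAt Ufun (-(3:ℝ)/4 * (Iw a 1 + Iw a 2)) a := by
  have h := hasDerivAt_wint (g := fun φ => (1 + Real.cos φ) / 2) (by continuity)
    (fun φ => by
      rw [abs_div]
      have h1 := Real.neg_one_le_cos φ
      have h2 := Real.cos_le_one φ
      rw [abs_of_nonneg (by linarith : (0:ℝ) ≤ 1 + Real.cos φ)]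
      rw [abs_of_pos (by norm_num : (0:ℝ) < 2)]
      linarith) ha
  rw [show (fun x => ∫ φ in (-π)..π,
      ((1 + Real.cos φ) / 2) * (1 + x * Real.cos φ) ^ (-(3:ℝ)/2)) = Ufun from
    funext fun x => rfl] at h
  convert h using 1
  rw [intervalIntegral.integral_congr (g := fun φ =>
      (0 + (-(3:ℝ)/4) * Real.cos φ + (-(3:ℝ)/4) * Real.cos φ ^ 2) *
        (1 + a * Real.cos φ) ^ (-(3:ℝ)/2 - 1))
    (fun φ _ => by simp only; ring), wint_poly ha]
  ring

lemma Iw_cs {a : ℝ} (ha : |a| < 1) : Iw a 1 ^ 2 ≤ Iw a 0 * Iw a 2 := by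
  have h0 := Iw_zero_pos ha
  have key : (0:ℝ) ≤ ∫ φ in (-π)..π,
      (Iw a 1 ^ 2 + (-(2 * Iw a 1 * Iw a 0)) * Real.cos φ + Iw a 0 ^ 2 * Real.cos φ ^ 2) *
        (1 + a * Real.cos φ) ^ (-(3:ℝ)/2 - 1) := by
    apply intervalIntegral.integral_nonneg (by linarith [Real.pi_pos])
    intro φ _
    have hw : (0:ℝ) ≤ (1 + a * Real.cos φ) ^ (-(3:ℝ)/2 - 1) :=
      (Real.rpow_pos_of_pos (base_pos ha φ) _).le
    have hsq := sq_nonneg (Iw a 1 - Iw a 0 * Real.cos φ)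
    nlinarith [mul_nonneg hsq hw]
  rw [wint_poly ha] at key
  nlinarith

lemma Vfun_pos {a : ℝ} (ha : |a| < 1) : 0 < Vfun a := by
  apply intervalIntegral.intervalIntegral_pos_of_pos (f := fun φ =>
    (1 + a * Real.cos φ) ^ (-(3:ℝ)/2))
  · exact (cont_w ha _).intervalIntegrable _ _
  · exact fun x => Real.rpow_pos_of_pos (base_pos ha x) _
  · linarith [Real.pi_pos]

lemma key_ineq {a : ℝ} (ha : a ∈ Set.Ioo (-1 : ℝ) 1) :
    deriv Ufun a * Vfun a - Ufun a * deriv Vfun a ≤ 0 := by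
  have ha' : |a| < 1 := abs_lt.2 ⟨ha.1, ha.2⟩
  rw [(hasDerivAt_Ufun ha').deriv, (hasDerivAt_Vfun ha').deriv, Ufun_eq ha', Vfun_eq ha']
  have hcs := Iw_cs ha'
  nlinarith [hcs]

lemma antitone_UV : AntitoneOn (fun a => Ufun a / Vfun a) (Set.Ioo (-1 : ℝ) 1) := by
  have hd : ∀ a ∈ Set.Ioo (-1:ℝ) 1, HasDerivAt (fun x => Ufun x / Vfun x)
      ((deriv Ufun a * Vfun a - Ufun a * deriv Vfun a) / Vfun a ^ 2) a := by
    intro a ha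
    have ha' : |a| < 1 := abs_lt.2 ⟨ha.1, ha.2⟩
    have hU := hasDerivAt_Ufun ha'
    have hV := hasDerivAt_Vfun ha'
    have := hU.div hV (ne_of_gt (Vfun_pos ha'))
    rwa [hU.deriv, hV.deriv]
  have hdo : DifferentiableOn ℝ (fun a => Ufun a / Vfun a) (Set.Ioo (-1:ℝ) 1) :=
    fun a ha => ((hd a ha).differentiableAt).differentiableWithinAt
  apply antitoneOn_of_deriv_nonpos (convex_Ioo _ _) hdo.continuousOn
  · rw [interior_Ioo]; exact hdo
  · intro a ha
    rw [interior_Ioo] at ha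
    rw [(hd a ha).deriv]
    apply div_nonpos_of_nonpos_of_nonneg (key_ineq ha) (sq_nonneg _)

/-- the substitution `a(κ) = -κ²/(2-κ²)` -/
noncomputable def aof (κ : ℝ) : ℝ := -(κ^2) / (2 - κ^2)

lemma aof_mem {κ : ℝ} (hκ : κ ∈ Set.Ico (0:ℝ) 1) : aof κ ∈ Set.Ioo (-1:ℝ) 1 := by
  obtain ⟨h0, h1⟩ := hκ
  have h2 : (0:ℝ) < 2 - κ^2 := by nlinarith
  constructor
  · rw [aof, neg_div, neg_lt_neg_iff, div_lt_one h2]; nlinarith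
  · rw [aof]
    have : -(κ^2) / (2 - κ^2) ≤ 0 := div_nonpos_of_nonpos_of_nonneg (by nlinarith) h2.le
    linarith

lemma aof_anti {κ₁ κ₂ : ℝ} (h1 : κ₁ ∈ Set.Ico (0:ℝ) 1) (h2 : κ₂ ∈ Set.Ico (0:ℝ) 1)
    (h12 : κ₁ ≤ κ₂) : aof κ₂ ≤ aof κ₁ := by
  have d1 : (0:ℝ) < 2 - κ₁^2 := by nlinarith [h1.1, h1.2]
  have d2 : (0:ℝ) < 2 - κ₂^2 := by nlinarith [h2.1, h2.2]
  rw [aof, aof, neg_div, neg_div, neg_le_neg_iff, div_le_div_iff₀ d1 d2]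
  nlinarith [h1.1]

lemma integral_comp_two_mul {h : ℝ → ℝ} (hh : Continuous h)
    (hper : Function.Periodic h (2*π)) :
    (∫ θ in (-π)..π, h (2*θ)) = ∫ φ in (-π)..π, h φ := by
  rw [intervalIntegral.integral_comp_mul_left h two_ne_zero]
  have hint : ∀ u v : ℝ, IntervalIntegrable h volume u v := fun u v =>
    hh.intervalIntegrable u v
  have e1 : (∫ x in (2*(-π))..(2*π), h x)
      = (∫ x in (2*(-π))..(0:ℝ), h x) + ∫ x in (0:ℝ)..(2*π), h x :=
    (intervalIntegral.integral_add_adjacent_intervals (hint _ _) (hint _ _)).symm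
  have e2 : (∫ x in (2*(-π))..(0:ℝ), h x) = ∫ x in (-π)..π, h x := by
    have := hper.intervalIntegral_add_eq (2*(-π)) (-π)
    rw [show 2*(-π) + 2*π = (0:ℝ) by ring, show -π + 2*π = π by ring] at this
    exact this
  have e3 : (∫ x in (0:ℝ)..(2*π), h x) = ∫ x in (-π)..π, h x := by
    have := hper.intervalIntegral_add_eq 0 (-π)
    rw [show (0:ℝ) + 2*π = 2*π by ring, show -π + 2*π = π by ring] at this
    exact this
  rw [e1, e2, e3, smul_eq_mul]
  ring

lemma Ccal_eq {κ : ℝ} (hκ : κ ∈ Set.Ico (0:ℝ) 1) :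
    Ccal κ = Ufun (aof κ) / Vfun (aof κ) := by
  obtain ⟨h0, h1⟩ := hκ
  set a := aof κ with ha_def
  have ha : |a| < 1 := abs_lt.2 ⟨(aof_mem ⟨h0, h1⟩).1, (aof_mem ⟨h0, h1⟩).2⟩
  have hC : (0:ℝ) < 1 - κ^2/2 := by nlinarith
  have hbase : ∀ θ : ℝ, 1 - κ^2 * Real.cos θ ^ 2
      = (1 - κ^2/2) * (1 + a * Real.cos (2*θ)) := by
    intro θ
    have h2 : (0:ℝ) < 2 - κ^2 := by nlinarith
    rw [Real.cos_two_mul, ha_def, aof]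
    field_simp
    ring
  have hsplit : ∀ θ : ℝ, (1 - κ^2 * Real.cos θ ^ 2) ^ (-(3:ℝ)/2)
      = (1 - κ^2/2) ^ (-(3:ℝ)/2) * (1 + a * Real.cos (2*θ)) ^ (-(3:ℝ)/2) := by
    intro θ
    rw [hbase θ, Real.mul_rpow hC.le (base_pos ha (2*θ)).le]
  have hcont1 : Continuous (fun φ => ((1 + Real.cos φ)/2)
      * (1 + a * Real.cos φ) ^ (-(3:ℝ)/2)) :=
    (by continuity : Continuous fun φ : ℝ => (1 + Real.cos φ)/2).mul (cont_w ha _)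
  have hper1 : Function.Periodic (fun φ => ((1 + Real.cos φ)/2)
      * (1 + a * Real.cos φ) ^ (-(3:ℝ)/2)) (2*π) := by
    intro x; simp [Real.cos_periodic x]
  have hper2 : Function.Periodic (fun φ => (1 + a * Real.cos φ) ^ (-(3:ℝ)/2)) (2*π) := by
    intro x; simp [Real.cos_periodic x]
  have hnum : (∫ θ in (-π)..π, Real.cos θ ^ 2 * (1 - κ^2 * Real.cos θ ^ 2) ^ (-(3:ℝ)/2))
      = (1 - κ^2/2) ^ (-(3:ℝ)/2) * Ufun a := by
    rw [intervalIntegral.integral_congr (g := fun θ => (1 - κ^2/2) ^ (-(3:ℝ)/2) *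
        (((1 + Real.cos (2*θ))/2) * (1 + a * Real.cos (2*θ)) ^ (-(3:ℝ)/2)))
      (fun θ _ => by
        rw [hsplit θ, Real.cos_sq θ]
        ring),
      intervalIntegral.integral_const_mul]
    rw [integral_comp_two_mul hcont1 hper1]
    rfl
  have hden : (∫ θ in (-π)..π, (1 - κ^2 * Real.cos θ ^ 2) ^ (-(3:ℝ)/2))
      = (1 - κ^2/2) ^ (-(3:ℝ)/2) * Vfun a := by
    rw [intervalIntegral.integral_congr (g := fun θ => (1 - κ^2/2) ^ (-(3:ℝ)/2) *
        ((1 + a * Real.cos (2*θ)) ^ (-(3:ℝ)/2)))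
      (fun θ _ => hsplit θ),
      intervalIntegral.integral_const_mul]
    rw [integral_comp_two_mul (cont_w ha _) hper2]
    rfl
  rw [Ccal, hnum, hden,
    mul_div_mul_left _ _ (ne_of_gt (Real.rpow_pos_of_pos hC _))]

/-- `𝒞` is weakly increasing on `[0,1)`; more precisely, in the substituted
form `U/V` one has `U'V - UV' ≤ 0` on `(-1,1)`, i.e. `U/V` is nonincreasing in `a`. -/
theorem Ccal_monotone :
    MonotoneOn Ccal (Set.Ico (0 : ℝ) 1) ∧
    (∀ a ∈ Set.Ioo (-1 : ℝ) 1,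
      deriv Ufun a * Vfun a - Ufun a * deriv Vfun a ≤ 0) ∧
    AntitoneOn (fun a => Ufun a / Vfun a) (Set.Ioo (-1 : ℝ) 1) := by
  refine ⟨?_, fun a ha => key_ineq ha, antitone_UV⟩
  intro κ₁ h1 κ₂ h2 h12
  rw [Ccal_eq h1, Ccal_eq h2]
  exact antitone_UV (aof_mem h2) (aof_mem h1) (aof_anti h1 h2 h12)
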